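/- Let d ≥ 2 and let G_1 : [n_1]×[r_1] → ℝ, G_k : [r_{k−1}]×[n_k]×[r_k] → ℝ for k = 2,…,d−1, and G_d : [r_{d−1}]×[n_d] → ℝ. Then the supremum norm of their contraction is bounded by the product of the slice norms: ‖G_1∘⋯∘G_d‖_∞ ≤ |||G_1|||·|||G_2|||⋯|||G_d|||. -/
import Mathlib


open scoped BigOperators
open Matrix

/-- Indices `(x_0, …, x_{k-1})` of the first `k` variables (sizes given by `n`). -/
abbrev PreIdx (n : ℕ → ℕ) (k : ℕ) := ∀ i : Fin k, Fin (n i)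

/-- Indices `(x_k, …, x_{d-1})` of the variables with position `≥ k`. -/
abbrev SufIdx (n : ℕ → ℕ) (d k : ℕ) := ∀ i : {i : Fin d // k ≤ (i : ℕ)}, Fin (n i)

/-- Indices of the variables with position in the window `[a, b)`. -/
abbrev MidIdx (n : ℕ → ℕ) (d a b : ℕ) :=
  ∀ i : {i : Fin d // a ≤ (i : ℕ) ∧ (i : ℕ) < b}, Fin (n i)

/-- Glue a prefix index and a suffix index into a full index. -/
def glue {n : ℕ → ℕ} {d k : ℕ} (x : PreIdx n k) (y : SufIdx n d k) : PreIdx n d :=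
  fun i => if h : (i : ℕ) < k then x ⟨i, h⟩ else y ⟨i, Nat.le_of_not_lt h⟩

/-- The `k`-th unfolding matrix of a `d`-dimensional tensor `p`. -/
def unfold {n : ℕ → ℕ} {d : ℕ} (p : PreIdx n d → ℝ) (k : ℕ) :
    Matrix (PreIdx n k) (SufIdx n d k) ℝ :=
  Matrix.of fun x y => p (glue x y)

/-- Column space of a matrix: span of its columns. -/
noncomputable def colSpace {R C : Type*} (M : Matrix R C ℝ) : Submodule ℝ (R → ℝ) :=
  Submodule.span ℝ (Set.range fun c => fun r => M r c)

/-- Row space of a matrix: span of its rows. -/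
noncomputable def rowSpace {R C : Type*} (M : Matrix R C ℝ) : Submodule ℝ (C → ℝ) :=
  Submodule.span ℝ (Set.range fun r => fun c => M r c)

/-- Rank of a matrix (dimension of its column space). -/
noncomputable def mrank {R C : Type*} (M : Matrix R C ℝ) : ℕ :=
  Module.finrank ℝ ↥(colSpace M)

/-- Restriction of a prefix index to the first `k` variables. -/
def takePre {n : ℕ → ℕ} {k : ℕ} (x : PreIdx n (k + 1)) : PreIdx n k :=
  fun i => x ⟨i, Nat.lt_succ_of_lt i.isLt⟩

/-- Extend a prefix index by one more variable. -/
def snoc' {n : ℕ → ℕ} {k : ℕ} (z : PreIdx n k) (a : Fin (n k)) : PreIdx n (k + 1) :=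
  fun i =>
    if h : (i : ℕ) < k then z ⟨i, h⟩
    else Fin.cast (congrArg n (by have := i.isLt; omega : k = (i : ℕ))) a

/-- A family of tensor-train cores: core `k` has shape `r k × n k × r (k+1)`.
(The first and last cores carry a dummy index of size `r 0 = 1`, `r d = 1`.) -/
abbrev CoreType (n r : ℕ → ℕ) (d : ℕ) :=
  ∀ k : Fin d, Fin (r k) → Fin (n k) → Fin (r ((k : ℕ) + 1)) → ℝ

/-- Partial contraction of the first `k` cores. -/
noncomputable def ttPrefixF {d : ℕ} {n r : ℕ → ℕ} (G : CoreType n r d) :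
    (k : ℕ) → k ≤ d → PreIdx n k → Fin (r 0) → Fin (r k) → ℝ
  | 0, _, _, a, b => if (a : ℕ) = (b : ℕ) then 1 else 0
  | k + 1, h, x, a, b =>
      ∑ c : Fin (r k),
        ttPrefixF G k (Nat.le_of_succ_le h) (takePre x) a c * G ⟨k, h⟩ c (x (Fin.last k)) b

/-- Full contraction `G_1 ∘ ⋯ ∘ G_d` of a family of tensor-train cores. -/
noncomputable def ttContract {d : ℕ} {n r : ℕ → ℕ} (G : CoreType n r d)
    (x : PreIdx n d) : ℝ :=
  ∑ a : Fin (r 0), ∑ b : Fin (r d), ttPrefixF G d le_rfl x a b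

/-- The recursively contracted left sketch functions `S_k` built from blocks `s_k`. -/
noncomputable def leftSketch {n m : ℕ → ℕ}
    (s : ∀ k : ℕ, Fin (m (k + 1)) → Fin (n k) → Fin (m k) → ℝ) :
    (k : ℕ) → Fin (m k) → PreIdx n k → ℝ
  | 0, _, _ => 1
  | k + 1, β, x => ∑ c : Fin (m k), s k β (x (Fin.last k)) c * leftSketch s k c (takePre x)

/-- The right-sketched unfolding `Φ̄_k = p ∘ T_{k+1}`. -/
noncomputable def rightSketched {n : ℕ → ℕ} {d : ℕ} (p : PreIdx n d → ℝ)
    {ℓ : ℕ → ℕ} (T : ∀ k : ℕ, SufIdx n d k → Fin (ℓ k) → ℝ) (k : ℕ)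
    (x : PreIdx n k) (γ : Fin (ℓ k)) : ℝ :=
  ∑ y : SufIdx n d k, p (glue x y) * T k y γ

/-- The doubly sketched tensor `Φ̃_{j+1} = S_j ∘ Φ̄_{j+1}`. -/
noncomputable def tildePhi {n : ℕ → ℕ} {d : ℕ} {ℓ m : ℕ → ℕ} (p : PreIdx n d → ℝ)
    (T : ∀ k : ℕ, SufIdx n d k → Fin (ℓ k) → ℝ)
    (s : ∀ k : ℕ, Fin (m (k + 1)) → Fin (n k) → Fin (m k) → ℝ)
    (j : ℕ) (β : Fin (m j)) (xj : Fin (n j)) (γ : Fin (ℓ (j + 1))) : ℝ :=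
  ∑ z : PreIdx n j, leftSketch s j β z * rightSketched p T (j + 1) (snoc' z xj) γ

/-- Marginal of `p` on the window of variables `[a, b)`. -/
noncomputable def winMarg {n : ℕ → ℕ} {d : ℕ} (p : PreIdx n d → ℝ) (a b : ℕ)
    (y : MidIdx n d a b) : ℝ :=
  ∑ z : ∀ i : {i : Fin d // (i : ℕ) < a ∨ b ≤ (i : ℕ)}, Fin (n i),
    p fun i =>
      if h : a ≤ (i : ℕ) ∧ (i : ℕ) < b then y ⟨i, h⟩ else z ⟨i, by omega⟩

/-- Marginal of `p` on the window `[a, b)`, viewed as a matrix with rows indexed by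
variables in `[a, c)` and columns by variables in `[c, b)`. -/
noncomputable def winMatrix {n : ℕ → ℕ} {d : ℕ} (p : PreIdx n d → ℝ) (a c b : ℕ) :
    Matrix (MidIdx n d a c) (MidIdx n d c b) ℝ :=
  Matrix.of fun x y =>
    ∑ z : ∀ i : {i : Fin d // (i : ℕ) < a ∨ b ≤ (i : ℕ)}, Fin (n i),
      p fun i =>
        if h1 : a ≤ (i : ℕ) ∧ (i : ℕ) < c then x ⟨i, h1⟩
        else if h2 : c ≤ (i : ℕ) ∧ (i : ℕ) < b then y ⟨i, h2⟩
        else z ⟨i, by omega⟩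

/-- A (first-order) discrete Markov model: a probability density such that for all
`2 ≤ k ≤ d - 1` (1-based), `p(x) · p_k(x_k) = p_{1:k}(x_{1:k}) · p_{k:d}(x_{k:d})`. -/
def IsMarkov {n : ℕ → ℕ} {d : ℕ} (p : PreIdx n d → ℝ) : Prop :=
  (∀ x, 0 ≤ p x) ∧ (∑ x : PreIdx n d, p x) = 1 ∧
    ∀ k : ℕ, 2 ≤ k → k ≤ d - 1 → ∀ x : PreIdx n d,
      p x * winMarg p (k - 1) k (fun i => x i.1) =
        winMarg p 0 k (fun i => x i.1) * winMarg p (k - 1) d (fun i => x i.1)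

/-- An order-`m` discrete Markov model. -/
def IsMarkovOrder {n : ℕ → ℕ} {d : ℕ} (m : ℕ) (p : PreIdx n d → ℝ) : Prop :=
  (∀ x, 0 ≤ p x) ∧ (∑ x : PreIdx n d, p x) = 1 ∧
    ∀ k : ℕ, m + 1 ≤ k → k ≤ d - 1 → ∀ x : PreIdx n d,
      p x * winMarg p (k - m) k (fun i => x i.1) =
        winMarg p 0 k (fun i => x i.1) * winMarg p (k - m) d (fun i => x i.1)

/-- Spectral norm (ℓ² → ℓ² operator norm) of a matrix. -/
noncomputable def specNorm {R C : Type*} [Fintype R] [Fintype C] [DecidableEq C]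
    (M : Matrix R C ℝ) : ℝ :=
  ‖LinearMap.toContinuousLinearMap (Matrix.toEuclideanLin M)‖

/-- Moore–Penrose pseudoinverse of a full-column-rank matrix, `A⁺ = (AᵀA)⁻¹Aᵀ`. -/
noncomputable def pinv {m n : ℕ} (A : Matrix (Fin m) (Fin n) ℝ) :
    Matrix (Fin n) (Fin m) ℝ :=
  (Aᵀ * A)⁻¹ * Aᵀ

/-- The norm `|||G|||`: max over the middle index of the spectral norm of the slices. -/
noncomputable def tnorm {a b c : ℕ} (G : Fin a → Fin b → Fin c → ℝ) : ℝ :=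
  ⨆ i : Fin b, specNorm (Matrix.of fun x y => G x i y)

/-- Supremum norm of a 3-tensor. -/
noncomputable def supNorm3 {a b c : ℕ} (G : Fin a → Fin b → Fin c → ℝ) : ℝ :=
  ⨆ q : Fin a × Fin b × Fin c, |G q.1 q.2.1 q.2.2|

/-- Supremum norm of a `d`-dimensional tensor. -/
noncomputable def supNormF {n : ℕ → ℕ} {d : ℕ} (f : PreIdx n d → ℝ) : ℝ :=
  ⨆ x : PreIdx n d, |f x|

open scoped Matrix.Norms.L2Operator

lemma tnorm_nonneg {a b c : ℕ} (G : Fin a → Fin b → Fin c → ℝ) : 0 ≤ tnorm G :=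
  Real.iSup_nonneg fun _ => norm_nonneg _

lemma specNorm_le_tnorm {a b c : ℕ} (G : Fin a → Fin b → Fin c → ℝ) (i : Fin b) :
    specNorm (Matrix.of fun x y => G x i y) ≤ tnorm G :=
  le_ciSup (f := fun i => specNorm (Matrix.of fun x y => G x i y))
    (Set.Finite.bddAbove (Set.finite_range _)) i

lemma specNorm_eq_l2norm {a b : ℕ} (M : Matrix (Fin a) (Fin b) ℝ) : specNorm M = ‖M‖ := rfl

lemma mulVecT_norm_le {a b : ℕ} (M : Matrix (Fin a) (Fin b) ℝ) (v : EuclideanSpace ℝ (Fin a)) :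
    ‖(EuclideanSpace.equiv (Fin b) ℝ).symm (Mᵀ *ᵥ (v : Fin a → ℝ))‖ ≤ specNorm M * ‖v‖ := by
  have h1 := Matrix.l2_opNorm_mulVec Mᵀ v
  have h2 : ‖Mᵀ‖ = ‖M‖ := by
    rw [← Matrix.l2_opNorm_conjTranspose M]
    congr 1
  rw [h2] at h1
  exact h1

lemma abs_apply_le_norm {a : ℕ} (v : EuclideanSpace ℝ (Fin a)) (i : Fin a) : |v i| ≤ ‖v‖ := by
  rw [EuclideanSpace.norm_eq]
  have : |v i| = Real.sqrt (‖v i‖ ^ 2) := by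
    rw [Real.sqrt_sq_eq_abs]; simp
  rw [this]
  apply Real.sqrt_le_sqrt
  exact Finset.single_le_sum (f := fun j => ‖v j‖ ^ 2) (fun j _ => sq_nonneg _) (Finset.mem_univ i)

lemma prefix_bound (d₀ : ℕ) (n r : ℕ → ℕ) (G : CoreType n r (d₀ + 2)) :
    ∀ (k : ℕ) (h : k ≤ d₀ + 2) (x : PreIdx n k) (a : Fin (r 0)),
      ‖(EuclideanSpace.equiv (Fin (r k)) ℝ).symm (fun b => ttPrefixF G k h x a b)‖ ≤
        ∏ j ∈ Finset.univ.filter (fun j : Fin (d₀ + 2) => (j : ℕ) < k), tnorm (G j) := by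
  intro k
  induction k with
  | zero =>
    intro h x a
    have hfil : Finset.univ.filter (fun j : Fin (d₀ + 2) => (j : ℕ) < 0) = ∅ := by
      ext j; simp
    rw [hfil, Finset.prod_empty]
    have hv : (EuclideanSpace.equiv (Fin (r 0)) ℝ).symm
        (fun b => ttPrefixF G 0 h x a b) = EuclideanSpace.single a (1 : ℝ) := by
      apply PiLp.ext
      intro b
      simp only [ttPrefixF, EuclideanSpace.single_apply]
      by_cases hab : (a : ℕ) = (b : ℕ)
      · have : b = a := Fin.ext hab.symm
        simp [hab, this]
      · have : ¬ b = a := fun hba => hab (by rw [hba])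
        simp [hab, this]
    rw [hv, EuclideanSpace.norm_single]
    norm_num
  | succ k ih =>
    intro h x a
    have hk : k ≤ d₀ + 2 := Nat.le_of_succ_le h
    set M : Matrix (Fin (r k)) (Fin (r (k + 1))) ℝ :=
      Matrix.of fun c b => G ⟨k, h⟩ c (x (Fin.last k)) b with hM
    set v : EuclideanSpace ℝ (Fin (r k)) :=
      (EuclideanSpace.equiv (Fin (r k)) ℝ).symm (fun b => ttPrefixF G k hk (takePre x) a b) with hv
    have heq : (EuclideanSpace.equiv (Fin (r (k + 1))) ℝ).symm
        (fun b => ttPrefixF G (k + 1) h x a b) =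
        (EuclideanSpace.equiv (Fin (r (k + 1))) ℝ).symm (Mᵀ *ᵥ (v : Fin (r k) → ℝ)) := by
      apply PiLp.ext
      intro b
      show (∑ c : Fin (r k), ttPrefixF G k hk (takePre x) a c * G ⟨k, h⟩ c (x (Fin.last k)) b)
          = ∑ c : Fin (r k), G ⟨k, h⟩ c (x (Fin.last k)) b * ttPrefixF G k hk (takePre x) a c
      exact Finset.sum_congr rfl fun c _ => mul_comm _ _
    have hins : Finset.univ.filter (fun j : Fin (d₀ + 2) => (j : ℕ) < k + 1) =
        insert (⟨k, h⟩ : Fin (d₀ + 2))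
          (Finset.univ.filter (fun j : Fin (d₀ + 2) => (j : ℕ) < k)) := by
      ext j
      simp only [Finset.mem_filter, Finset.mem_univ, true_and, Finset.mem_insert, Fin.ext_iff]
      omega
    have hnotmem : (⟨k, h⟩ : Fin (d₀ + 2)) ∉
        Finset.univ.filter (fun j : Fin (d₀ + 2) => (j : ℕ) < k) := by simp
    rw [heq, hins, Finset.prod_insert hnotmem]
    calc ‖(EuclideanSpace.equiv (Fin (r (k + 1))) ℝ).symm (Mᵀ *ᵥ (v : Fin (r k) → ℝ))‖
        ≤ specNorm M * ‖v‖ := mulVecT_norm_le M v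
      _ ≤ tnorm (G ⟨k, h⟩) *
          ∏ j ∈ Finset.univ.filter (fun j : Fin (d₀ + 2) => (j : ℕ) < k), tnorm (G j) := by
          apply mul_le_mul (specNorm_le_tnorm _ _) (ih hk (takePre x) a) (norm_nonneg _)
            (tnorm_nonneg _)

/-- the sup norm of a contraction of cores is bounded by the product of
the slice norms: `‖G_1 ∘ ⋯ ∘ G_d‖_∞ ≤ |||G_1||| ⋯ |||G_d|||`.
(Here `d = d₀ + 2 ≥ 2`, with dummy boundary ranks `r 0 = r d = 1`, for which `tnorm`
agrees with the Euclidean row/column norms of the paper on the first/last cores.) -/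
theorem contraction_supNorm_le_prod_tnorm
    (d₀ : ℕ) (n r : ℕ → ℕ) (hr0 : r 0 = 1) (hrd : r (d₀ + 2) = 1)
    (G : CoreType n r (d₀ + 2)) :
    supNormF (fun x => ttContract G x) ≤ ∏ k, tnorm (G k) := by
  have hprodnn : 0 ≤ ∏ k, tnorm (G k) := Finset.prod_nonneg fun k _ => tnorm_nonneg _
  apply Real.iSup_le _ hprodnn
  intro x
  have hfull : Finset.univ.filter (fun j : Fin (d₀ + 2) => (j : ℕ) < d₀ + 2) =
      Finset.univ := by
    ext j; simp [j.isLt]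
  have hb := prefix_bound d₀ n r G (d₀ + 2) le_rfl x
  rw [hfull] at hb
  have habs : ∀ (a : Fin (r 0)) (b : Fin (r (d₀ + 2))),
      |ttPrefixF G (d₀ + 2) le_rfl x a b| ≤ ∏ k, tnorm (G k) := by
    intro a b
    exact le_trans (abs_apply_le_norm ((EuclideanSpace.equiv (Fin (r (d₀ + 2))) ℝ).symm
      (fun b => ttPrefixF G (d₀ + 2) le_rfl x a b)) b) (hb a)
  calc |ttContract G x| ≤ ∑ a : Fin (r 0), ∑ b : Fin (r (d₀ + 2)),
        |ttPrefixF G (d₀ + 2) le_rfl x a b| := by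
        refine le_trans (Finset.abs_sum_le_sum_abs _ _) ?_
        exact Finset.sum_le_sum fun a _ => Finset.abs_sum_le_sum_abs _ _
    _ ≤ ∑ _a : Fin (r 0), ∑ _b : Fin (r (d₀ + 2)), ∏ k, tnorm (G k) :=
        Finset.sum_le_sum fun a _ => Finset.sum_le_sum fun b _ => habs a b
    _ = (r 0 : ℝ) * ((r (d₀ + 2) : ℝ) * ∏ k, tnorm (G k)) := by
        simp [Finset.sum_const, mul_assoc]
    _ = ∏ k, tnorm (G k) := by rw [hr0, hrd]; ring
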